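/- arXiv:1505.06620 — 6 statements merged into one kernel-verified Lean document; each statement's English description precedes it below -/
import Mathlib

section
/- Let L be a finite-dimensional subspace of L²([0,1]). Then the set E_L = { (t₁,t₂) : 0 ≤ t₁ < t₂ ≤ 1 and the equivalence class of 𝟙_{[t₁,t₂]} belongs to L } is finite. -/
open MeasureTheory

noncomputable def μ01 : Measure ℝ := volume.restrict (Set.Icc 0 1)

noncomputable abbrev L2 : Type := Lp ℝ 2 μ01

lemma μ01_Icc_ne_top (a b : ℝ) : μ01 (Set.Icc a b) ≠ ⊤ :=
  ((Measure.restrict_apply_le _ _).trans_lt measure_Icc_lt_top).ne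

/-- The element of `L²([0,1])` given by the indicator of `[a,b]`. -/
noncomputable def ind (a b : ℝ) : L2 :=
  indicatorConstLp 2 measurableSet_Icc (μ01_Icc_ne_top a b) (1 : ℝ)

lemma inner_ind (u w a b : ℝ) :
    inner ℝ (ind u w) (ind a b) = (μ01 (Set.Icc a b ∩ Set.Icc u w)).toReal := by
  rw [ind, ind, L2.inner_indicatorConstLp_one measurableSet_Icc (μ01_Icc_ne_top u w),
    setIntegral_indicatorConstLp measurableSet_Icc measurableSet_Icc (μ01_Icc_ne_top a b) (1:ℝ)]
  simp [Measure.real]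

lemma inner_ind_zero {u w a b : ℝ} (h : w ≤ a ∨ b ≤ u) :
    inner ℝ (ind u w) (ind a b) = 0 := by
  rw [inner_ind]
  have h1 : μ01 (Set.Icc a b ∩ Set.Icc u w) = 0 := by
    refine le_antisymm ?_ (zero_le)
    calc μ01 (Set.Icc a b ∩ Set.Icc u w) ≤ volume (Set.Icc a b ∩ Set.Icc u w) :=
          Measure.restrict_apply_le _ _
      _ = volume (Set.Icc (a ⊔ u) (b ⊓ w)) := by rw [Set.Icc_inter_Icc]
      _ = 0 := by
          rw [Real.volume_Icc, ENNReal.ofReal_eq_zero]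
          rcases h with h | h
          · have : b ⊓ w ≤ a ⊔ u := le_trans (inf_le_right) (h.trans le_sup_left)
            linarith
          · have : b ⊓ w ≤ a ⊔ u := le_trans (inf_le_left) (h.trans le_sup_right)
            linarith
  simp [h1]

lemma inner_ind_pos {u w a b : ℝ} (h0 : 0 ≤ u) (huw : u ≤ w) (hw1 : w ≤ 1)
    (hau : a ≤ u) (hwb : w ≤ b) :
    inner ℝ (ind u w) (ind a b) = w - u := by
  rw [inner_ind]
  have h1 : Set.Icc a b ∩ Set.Icc u w = Set.Icc u w :=
    Set.inter_eq_right.mpr (Set.Icc_subset_Icc hau hwb)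
  rw [h1, μ01, Measure.restrict_apply measurableSet_Icc]
  have h2 : Set.Icc u w ∩ Set.Icc (0:ℝ) 1 = Set.Icc u w :=
    Set.inter_eq_left.mpr (Set.Icc_subset_Icc h0 hw1)
  rw [h2, Real.volume_Icc, ENNReal.toReal_ofReal (by linarith)]


/-- Triangular induction: if every nonempty subfamily has a member whose interval contains a
positive-length test interval avoiding all other intervals, then any vanishing combination has
all coefficients zero. -/
lemma aux {ι : Type*} [DecidableEq ι] (a b : ι → ℝ) :
    ∀ s : Finset ι, ∀ c : ι → ℝ,
    (∀ t : Finset ι, t ⊆ s → t.Nonempty → ∃ i ∈ t, ∃ u w : ℝ,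
       0 ≤ u ∧ u < w ∧ w ≤ 1 ∧ a i ≤ u ∧ w ≤ b i ∧
       ∀ j ∈ t, j ≠ i → w ≤ a j ∨ b j ≤ u) →
    (∑ i ∈ s, c i • ind (a i) (b i)) = 0 → ∀ i ∈ s, c i = 0 := by
  intro s
  induction s using Finset.strongInduction with
  | _ s ih =>
    intro c H hsum i hi
    obtain ⟨k, hk, u, w, h0u, huw, hw1, hak, hwb, hdisj⟩ := H s (subset_refl s) ⟨i, hi⟩
    have hck : c k = 0 := by
      have h1 : inner ℝ (ind u w) (∑ j ∈ s, c j • ind (a j) (b j)) = c k * (w - u) := by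
        rw [inner_sum, Finset.sum_eq_single k]
        · rw [real_inner_smul_right, inner_ind_pos h0u huw.le hw1 hak hwb]
        · intro j hj hjk
          rw [real_inner_smul_right, inner_ind_zero (hdisj j hj hjk), mul_zero]
        · intro h; exact absurd hk h
      rw [hsum, inner_zero_right] at h1
      have hwu : w - u ≠ 0 := by linarith
      exact (mul_eq_zero.mp h1.symm).resolve_right hwu
    rcases eq_or_ne i k with rfl | hik
    · exact hck
    · have hsum' : ∑ j ∈ s.erase k, c j • ind (a j) (b j) = 0 := by
        have h2 := Finset.sum_erase_add s (fun j => c j • ind (a j) (b j)) hk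
        simp only [hck, zero_smul, add_zero] at h2
        rw [h2]; exact hsum
      exact ih (s.erase k) (Finset.erase_ssubset hk) c
        (fun t ht htne => H t (ht.trans (Finset.erase_subset _ _)) htne) hsum' i
        (Finset.mem_erase.mpr ⟨hik, hi⟩)

lemma main_contra (L : Submodule ℝ L2) (hL : FiniteDimensional ℝ L) (a b : ℕ → ℝ)
    (hmem : ∀ n, ind (a n) (b n) ∈ L)
    (H : ∀ t : Finset ℕ, t.Nonempty → ∃ i ∈ t, ∃ u w : ℝ,
       0 ≤ u ∧ u < w ∧ w ≤ 1 ∧ a i ≤ u ∧ w ≤ b i ∧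
       ∀ j ∈ t, j ≠ i → w ≤ a j ∨ b j ≤ u) : False := by
  have hli : LinearIndependent ℝ (fun n => ind (a n) (b n)) :=
    linearIndependent_iff'.mpr fun s c h i hi =>
      aux a b s c (fun t ht htne => H t htne) h i hi
  have hli2 : LinearIndependent ℝ (fun n : ℕ => (⟨ind (a n) (b n), hmem n⟩ : L)) :=
    hli.of_comp L.subtype
  haveI := hli2.finite
  exact not_finite ℕ

/-- Case 1: distinct left endpoints give a triangular family. -/
lemma case1 (a b : ℕ → ℝ) (hainj : Function.Injective a)
    (h : ∀ n, 0 ≤ a n ∧ a n < b n ∧ b n ≤ 1) :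
    ∀ t : Finset ℕ, t.Nonempty → ∃ i ∈ t, ∃ u w : ℝ,
      0 ≤ u ∧ u < w ∧ w ≤ 1 ∧ a i ≤ u ∧ w ≤ b i ∧
      ∀ j ∈ t, j ≠ i → w ≤ a j ∨ b j ≤ u := by
  intro t ht
  obtain ⟨i, hi, hmin⟩ := t.exists_min_image a ht
  set f : ℕ → ℝ := fun j => if j = i then b i else a j with hf
  refine ⟨i, hi, a i, t.inf' ht f, (h i).1, ?_, ?_, le_refl _, ?_, ?_⟩
  · obtain ⟨j, hj, hw⟩ := t.exists_mem_eq_inf' ht f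
    rw [hw, hf]
    rcases eq_or_ne j i with rfl | hji
    · simpa using (h j).2.1
    · simp only [if_neg hji]
      exact lt_of_le_of_ne (hmin j hj) (fun e => hji (hainj e.symm))
  · calc t.inf' ht f ≤ f i := Finset.inf'_le f hi
      _ = b i := by simp [hf]
      _ ≤ 1 := (h i).2.2
  · calc t.inf' ht f ≤ f i := Finset.inf'_le f hi
      _ = b i := by simp [hf]
  · intro j hj hji
    left
    calc t.inf' ht f ≤ f j := Finset.inf'_le f hj
      _ = a j := by simp [hf, hji]

/-- Case 2: common left endpoint, distinct right endpoints. -/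
lemma case2 (x : ℝ) (b : ℕ → ℝ) (hbinj : Function.Injective b)
    (h : ∀ n, 0 ≤ x ∧ x < b n ∧ b n ≤ 1) :
    ∀ t : Finset ℕ, t.Nonempty → ∃ i ∈ t, ∃ u w : ℝ,
      0 ≤ u ∧ u < w ∧ w ≤ 1 ∧ x ≤ u ∧ w ≤ b i ∧
      ∀ j ∈ t, j ≠ i → w ≤ x ∨ b j ≤ u := by
  intro t ht
  obtain ⟨i, hi, hmax⟩ := t.exists_max_image b ht
  set f : ℕ → ℝ := fun j => if j = i then x else b j with hf
  have hfi : f i = x := by simp [hf]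
  refine ⟨i, hi, t.sup' ht f, b i, ?_, ?_, (h i).2.2, ?_, le_refl _, ?_⟩
  · calc (0:ℝ) ≤ x := (h i).1
      _ = f i := hfi.symm
      _ ≤ t.sup' ht f := Finset.le_sup' f hi
  · obtain ⟨j, hj, hu⟩ := t.exists_mem_eq_sup' ht f
    rw [hu, hf]
    rcases eq_or_ne j i with rfl | hji
    · simpa using (h j).2.1
    · simp only [if_neg hji]
      exact lt_of_le_of_ne (hmax j hj) (fun e => hji (hbinj e))
  · calc x = f i := hfi.symm
      _ ≤ t.sup' ht f := Finset.le_sup' f hi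
  · intro j hj hji
    right
    calc b j = f j := by simp [hf, hji]
      _ ≤ t.sup' ht f := Finset.le_sup' f hj

/-- Lemma 1. For a finite-dimensional subspace `L` of `L²([0,1])`,
the set `E_L = {(t₁,t₂) : 0 ≤ t₁ < t₂ ≤ 1, 𝟙_{[t₁,t₂]} ∈ L}` is finite. -/
theorem indicators_in_finite_dimensional_subspace_finite
    (L : Submodule ℝ L2) (hL : FiniteDimensional ℝ L) :
    {p : ℝ × ℝ | 0 ≤ p.1 ∧ p.1 < p.2 ∧ p.2 ≤ 1 ∧ ind p.1 p.2 ∈ L}.Finite := by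
  set E := {p : ℝ × ℝ | 0 ≤ p.1 ∧ p.1 < p.2 ∧ p.2 ≤ 1 ∧ ind p.1 p.2 ∈ L} with hE
  rw [← Set.not_infinite]
  intro hEinf
  by_cases hA : (Prod.fst '' E).Infinite
  · -- infinitely many left endpoints
    have hch : ∀ x : Prod.fst '' E, ∃ y : ℝ, ((x : ℝ), y) ∈ E := by
      rintro ⟨x, p, hp, rfl⟩
      exact ⟨p.2, hp⟩
    choose g hg using hch
    obtain e := hA.natEmbedding
    set a : ℕ → ℝ := fun n => (e n : ℝ) with ha
    set b : ℕ → ℝ := fun n => g (e n) with hb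
    have hmem : ∀ n, (a n, b n) ∈ E := fun n => hg (e n)
    have hainj : Function.Injective a :=
      fun m n hmn => e.injective (Subtype.ext hmn)
    exact main_contra L hL a b (fun n => (hmem n).2.2.2)
      (case1 a b hainj (fun n => ⟨(hmem n).1, (hmem n).2.1, (hmem n).2.2.1⟩))
  · -- finitely many left endpoints: some fiber is infinite
    have hAfin : (Prod.fst '' E).Finite := Set.not_infinite.mp hA
    have hfib : ∃ x, {y | (x, y) ∈ E}.Infinite := by
      by_contra hc
      push_neg at hc
      have hsub : E ⊆ ⋃ x ∈ Prod.fst '' E, (fun y => (x, y)) '' {y | (x, y) ∈ E} := by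
        rintro ⟨x, y⟩ hp
        exact Set.mem_biUnion ⟨(x, y), hp, rfl⟩ ⟨y, hp, rfl⟩
      exact hEinf (Set.Finite.subset (hAfin.biUnion fun x _ => (hc x).image _) hsub)
    obtain ⟨x, hx⟩ := hfib
    obtain e := hx.natEmbedding
    set b : ℕ → ℝ := fun n => (e n : ℝ) with hb
    have hmem : ∀ n, (x, b n) ∈ E := fun n => (e n).2
    have hbinj : Function.Injective b :=
      fun m n hmn => e.injective (Subtype.ext hmn)
    exact main_contra L hL (fun _ => x) b (fun n => (hmem n).2.2.2)
      (case2 x b hbinj (fun n => ⟨(hmem n).1, (hmem n).2.1, (hmem n).2.2.1⟩))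
end

section
/- Fix 0 ≤ t₁⁰ < t₂⁰ ≤ 1. Then the family of unit vectors (𝟙_{[t₁,t₂]} − 𝟙_{[t₁⁰,t₂⁰]}) / ‖𝟙_{[t₁,t₂]} − 𝟙_{[t₁⁰,t₂⁰]}‖, indexed by pairs (t₁,t₂) with 0 ≤ t₁ < t₂ ≤ 1 and (t₁,t₂) ≠ (t₁⁰,t₂⁰), converges weakly to zero in L²([0,1]) as (t₁,t₂) → (t₁⁰,t₂⁰); that is, for every h ∈ L²([0,1]), the inner product ⟨h, (𝟙_{[t₁,t₂]} − 𝟙_{[t₁⁰,t₂⁰]})/‖𝟙_{[t₁,t₂]} − 𝟙_{[t₁⁰,t₂⁰]}‖⟩ tends to 0 as (t₁,t₂) → (t₁⁰,t₂⁰). -/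
open MeasureTheory

lemma ind_coe (a b : ℝ) :
    ⇑(ind a b) =ᵐ[μ01] (Set.Icc a b).indicator (fun _ => (1:ℝ)) :=
  indicatorConstLp_coeFn

lemma coe_normalized (t1 t2 a b : ℝ) :
    ⇑((‖ind t1 t2 - ind a b‖⁻¹ : ℝ) • (ind t1 t2 - ind a b)) =ᵐ[μ01]
      fun x => ‖ind t1 t2 - ind a b‖⁻¹ *
        ((Set.Icc t1 t2).indicator (fun _ => (1:ℝ)) x
          - (Set.Icc a b).indicator (fun _ => (1:ℝ)) x) := by
  filter_upwards [Lp.coeFn_smul (‖ind t1 t2 - ind a b‖⁻¹ : ℝ) (ind t1 t2 - ind a b),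
    Lp.coeFn_sub (ind t1 t2) (ind a b), ind_coe t1 t2, ind_coe a b] with x h1 h2 h3 h4
  rw [h1, Pi.smul_apply, h2, Pi.sub_apply, h3, h4, smul_eq_mul]

lemma inner_eq_aux (h g : L2) (t1 t2 a b : ℝ) (T : Set ℝ)
    (hg : ⇑g =ᵐ[μ01] T.indicator ⇑h)
    (hT : ∀ x ∉ T, (Set.Icc t1 t2).indicator (fun _ => (1:ℝ)) x
        = (Set.Icc a b).indicator (fun _ => (1:ℝ)) x) :
    (inner ℝ h (‖ind t1 t2 - ind a b‖⁻¹ • (ind t1 t2 - ind a b)) : ℝ)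
      = inner ℝ g (‖ind t1 t2 - ind a b‖⁻¹ • (ind t1 t2 - ind a b)) := by
  have key : (inner ℝ (h - g) (‖ind t1 t2 - ind a b‖⁻¹ • (ind t1 t2 - ind a b)) : ℝ) = 0 := by
    rw [MeasureTheory.L2.inner_def]
    refine integral_eq_zero_of_ae ?_
    filter_upwards [Lp.coeFn_sub h g, hg, coe_normalized t1 t2 a b] with x h1 h2 h3
    simp only [RCLike.inner_apply, starRingEnd_apply, star_trivial, Pi.zero_apply]
    rw [h1, Pi.sub_apply, h2, h3]
    by_cases hx : x ∈ T
    · rw [Set.indicator_of_mem hx, sub_self, mul_zero]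
    · rw [hT x hx, sub_self, mul_zero, zero_mul]
  have h2 := inner_sub_left (𝕜 := ℝ) h g
    (‖ind t1 t2 - ind a b‖⁻¹ • (ind t1 t2 - ind a b))
  rw [key] at h2
  linarith [h2.symm]

/-- Lemma 2. For fixed `0 ≤ a0 < b0 ≤ 1`, the normalized differences
`(𝟙_{[t₁,t₂]} - 𝟙_{[a0,b0]}) / ‖𝟙_{[t₁,t₂]} - 𝟙_{[a0,b0]}‖` converge weakly to `0`
in `L²([0,1])` as `(t₁,t₂) → (a0,b0)` along pairs with `0 ≤ t₁ < t₂ ≤ 1`,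
`(t₁,t₂) ≠ (a0,b0)`. -/
theorem normalized_indicator_differences_weakly_null
    (a0 b0 : ℝ) (h₁ : 0 ≤ a0) (h₁₂ : a0 < b0) (h₂ : b0 ≤ 1) (h : L2) :
    Filter.Tendsto
      (fun p : ℝ × ℝ =>
        (inner ℝ h (‖ind p.1 p.2 - ind a0 b0‖⁻¹ • (ind p.1 p.2 - ind a0 b0)) : ℝ))
      (nhdsWithin (a0, b0)
        {p : ℝ × ℝ | 0 ≤ p.1 ∧ p.1 < p.2 ∧ p.2 ≤ 1 ∧ p ≠ (a0, b0)})
      (nhds 0) := by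
  rw [Metric.tendsto_nhdsWithin_nhds]
  intro ε hε
  obtain ⟨η, hηpos, hind⟩ :=
    (Lp.memLp h).eLpNorm_indicator_le one_le_two ENNReal.ofNat_ne_top (half_pos hε)
  refine ⟨η / 4, by positivity, ?_⟩
  intro p _ hdist
  have hδpos : 0 < η / 4 := by positivity
  have hd1 : |p.1 - a0| < η / 4 := by
    have := (le_max_left (dist p.1 a0) (dist p.2 b0)).trans_lt (by rwa [Prod.dist_eq] at hdist)
    rwa [Real.dist_eq] at this
  have hd2 : |p.2 - b0| < η / 4 := by
    have := (le_max_right (dist p.1 a0) (dist p.2 b0)).trans_lt (by rwa [Prod.dist_eq] at hdist)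
    rwa [Real.dist_eq] at this
  obtain ⟨hd1l, hd1r⟩ := abs_lt.mp hd1
  obtain ⟨hd2l, hd2r⟩ := abs_lt.mp hd2
  set T : Set ℝ := Set.Icc (a0 - η/4) (a0 + η/4) ∪ Set.Icc (b0 - η/4) (b0 + η/4) with hTdef
  have hTmeas : MeasurableSet T := measurableSet_Icc.union measurableSet_Icc
  have hμT : μ01 T ≤ ENNReal.ofReal η := by
    refine (Measure.restrict_apply_le _ _).trans ?_
    refine (measure_union_le _ _).trans ?_
    rw [Real.volume_Icc, Real.volume_Icc,
      ← ENNReal.ofReal_add (by linarith) (by linarith)]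
    apply ENNReal.ofReal_le_ofReal
    linarith
  have hgmem : MemLp (T.indicator ⇑h) 2 μ01 := (Lp.memLp h).indicator hTmeas
  have hgnorm : ‖hgmem.toLp _‖ ≤ ε / 2 := by
    rw [Lp.norm_toLp]
    calc (eLpNorm (T.indicator ⇑h) 2 μ01).toReal
        ≤ (ENNReal.ofReal (ε / 2)).toReal :=
          ENNReal.toReal_mono ENNReal.ofReal_ne_top (hind T hTmeas hμT)
      _ = ε / 2 := ENNReal.toReal_ofReal (by linarith)
  have hwnorm : ‖(‖ind p.1 p.2 - ind a0 b0‖⁻¹ : ℝ) • (ind p.1 p.2 - ind a0 b0)‖ ≤ 1 := by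
    rw [norm_smul, norm_inv, norm_norm]
    rcases eq_or_ne ‖ind p.1 p.2 - ind a0 b0‖ 0 with h0 | h0
    · simp [h0]
    · rw [inv_mul_cancel₀ h0]
  have hT : ∀ x ∉ T, (Set.Icc p.1 p.2).indicator (fun _ => (1:ℝ)) x
      = (Set.Icc a0 b0).indicator (fun _ => (1:ℝ)) x := by
    intro x hx
    have hiff : x ∈ Set.Icc p.1 p.2 ↔ x ∈ Set.Icc a0 b0 := by
      simp only [hTdef, Set.mem_union, Set.mem_Icc, not_or, not_and_or, not_le] at hx
      obtain ⟨hA, hB⟩ := hx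
      simp only [Set.mem_Icc]
      constructor
      · rintro ⟨u1, u2⟩
        rcases hA with hA | hA <;> rcases hB with hB | hB <;>
          exact ⟨by linarith, by linarith⟩
      · rintro ⟨u1, u2⟩
        rcases hA with hA | hA <;> rcases hB with hB | hB <;>
          exact ⟨by linarith, by linarith⟩
    simp only [Set.indicator_apply]
    exact if_congr hiff rfl rfl
  rw [Real.dist_0_eq_abs,
    inner_eq_aux h (hgmem.toLp _) p.1 p.2 a0 b0 T hgmem.coeFn_toLp hT]
  calc |(inner ℝ (hgmem.toLp _)
        ((‖ind p.1 p.2 - ind a0 b0‖⁻¹ : ℝ) • (ind p.1 p.2 - ind a0 b0)) : ℝ)|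
      ≤ ‖hgmem.toLp _‖ * ‖(‖ind p.1 p.2 - ind a0 b0‖⁻¹ : ℝ) • (ind p.1 p.2 - ind a0 b0)‖ :=
        abs_real_inner_le_norm _ _
    _ ≤ (ε / 2) * 1 := mul_le_mul hgnorm hwnorm (norm_nonneg _) (by linarith)
    _ < ε := by linarith
end

section
/- Let S be a compact linear operator on L²([0,1]), let I be the identity operator, and suppose 0 ≤ t₁⁰ < t₂⁰ ≤ 1 with (I+S)𝟙_{[t₁⁰,t₂⁰]} = 0. Then ‖(I+S)𝟙_{[t₁,t₂]}‖² / ‖𝟙_{[t₁,t₂]} − 𝟙_{[t₁⁰,t₂⁰]}‖² → 1 as (t₁,t₂) → (t₁⁰,t₂⁰) along pairs with 0 ≤ t₁ < t₂ ≤ 1 and (t₁,t₂) ≠ (t₁⁰,t₂⁰). -/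
open MeasureTheory
open scoped ENNReal NNReal

namespace NormRatioAux

open Filter Set Real

local notation "⟪" x ", " y "⟫" => @inner ℝ L2 _ x y

/-- The difference of indicators. -/
noncomputable def vv (a0 b0 : ℝ) (p : ℝ × ℝ) : L2 := ind p.1 p.2 - ind a0 b0

/-- The normalized difference. -/
noncomputable def ww (a0 b0 : ℝ) (p : ℝ × ℝ) : L2 :=
  ‖vv a0 b0 p‖⁻¹ • vv a0 b0 p

/-- The symmetric difference set. -/
def Ep (a0 b0 : ℝ) (p : ℝ × ℝ) : Set ℝ :=
  Ico (min p.1 a0) (max p.1 a0) ∪ Ioc (min p.2 b0) (max p.2 b0)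

lemma Ep_meas (a0 b0 : ℝ) (p : ℝ × ℝ) : MeasurableSet (Ep a0 b0 p) :=
  measurableSet_Ico.union measurableSet_Ioc

/-- Pointwise representative of `vv`. -/
noncomputable def dd (a0 b0 : ℝ) (p : ℝ × ℝ) (x : ℝ) : ℝ :=
  (Icc p.1 p.2).indicator (fun _ => (1:ℝ)) x - (Icc a0 b0).indicator (fun _ => (1:ℝ)) x

lemma vv_ae (a0 b0 : ℝ) (p : ℝ × ℝ) : ⇑(vv a0 b0 p) =ᵐ[μ01] dd a0 b0 p := by
  have h := (Lp.coeFn_sub (ind p.1 p.2) (ind a0 b0)).trans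
    ((indicatorConstLp_coeFn (p := (2:ℝ≥0∞))).sub (indicatorConstLp_coeFn (p := (2:ℝ≥0∞))))
  exact h

section pointwise

variable {a0 b0 : ℝ} {p : ℝ × ℝ}

lemma dd_sq (hov1 : p.1 < b0) (hov2 : a0 < p.2) (x : ℝ) :
    dd a0 b0 p x * dd a0 b0 p x = (Ep a0 b0 p).indicator (fun _ => (1:ℝ)) x := by
  unfold dd Ep
  by_cases hA : x ∈ Icc p.1 p.2 <;> by_cases hB : x ∈ Icc a0 b0
  · have hE : x ∉ Ico (min p.1 a0) (max p.1 a0) ∪ Ioc (min p.2 b0) (max p.2 b0) := by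
      rintro (⟨h1', h2'⟩ | ⟨h1', h2'⟩)
      · exact absurd h2' (not_lt.2 (max_le hA.1 hB.1))
      · exact absurd h1' (not_lt.2 (le_min hA.2 hB.2))
    simp [Set.indicator_of_mem, Set.indicator_of_notMem, hA, hB, hE]
  · have hE : x ∈ Ico (min p.1 a0) (max p.1 a0) ∪ Ioc (min p.2 b0) (max p.2 b0) := by
      rcases lt_or_ge x a0 with h | h
      · exact Or.inl ⟨(min_le_left _ _).trans hA.1, lt_of_lt_of_le h (le_max_right _ _)⟩
      · rcases lt_or_ge b0 x with h' | h'
        · exact Or.inr ⟨lt_of_le_of_lt (min_le_right _ _) h', hA.2.trans (le_max_left _ _)⟩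
        · exact absurd ⟨h, h'⟩ hB
    simp [Set.indicator_of_mem, Set.indicator_of_notMem, hA, hB, hE]
  · have hE : x ∈ Ico (min p.1 a0) (max p.1 a0) ∪ Ioc (min p.2 b0) (max p.2 b0) := by
      rcases lt_or_ge x p.1 with h | h
      · exact Or.inl ⟨(min_le_right _ _).trans hB.1, lt_of_lt_of_le h (le_max_left _ _)⟩
      · rcases lt_or_ge p.2 x with h' | h'
        · exact Or.inr ⟨lt_of_le_of_lt (min_le_left _ _) h', hB.2.trans (le_max_right _ _)⟩
        · exact absurd ⟨h, h'⟩ hA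
    simp [Set.indicator_of_mem, Set.indicator_of_notMem, hA, hB, hE]
  · have hE : x ∉ Ico (min p.1 a0) (max p.1 a0) ∪ Ioc (min p.2 b0) (max p.2 b0) := by
      rintro (⟨h1', h2'⟩ | ⟨h1', h2'⟩)
      · rcases le_total p.1 a0 with h | h
        · rw [min_eq_left h] at h1'; rw [max_eq_right h] at h2'
          exact hA ⟨h1', (h2'.trans hov2).le⟩
        · rw [min_eq_right h] at h1'; rw [max_eq_left h] at h2'
          exact hB ⟨h1', (h2'.trans hov1).le⟩
      · rcases le_total p.2 b0 with h | h
        · rw [min_eq_left h] at h1'; rw [max_eq_right h] at h2'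
          exact hB ⟨(hov2.trans h1').le, h2'⟩
        · rw [min_eq_right h] at h1'; rw [max_eq_left h] at h2'
          exact hA ⟨(hov1.trans h1').le, h2'⟩
    simp [Set.indicator_of_mem, Set.indicator_of_notMem, hA, hB, hE]

lemma dd_zero (hov1 : p.1 < b0) (hov2 : a0 < p.2) {x : ℝ} (hx : x ∉ Ep a0 b0 p) :
    dd a0 b0 p x = 0 := by
  have := dd_sq hov1 hov2 x
  rw [Set.indicator_of_notMem hx] at this
  exact mul_self_eq_zero.1 this

end pointwise

section withhyp

variable {a0 b0 : ℝ} {p : ℝ × ℝ}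
variable (ha0 : 0 ≤ a0) (hab : a0 < b0) (hb0 : b0 ≤ 1)
variable (h1 : 0 ≤ p.1) (h12 : p.1 < p.2) (h2 : p.2 ≤ 1)
variable (hov1 : p.1 < b0) (hov2 : a0 < p.2)

include ha0 hab hb0 h1 h12 h2 hov1 hov2 in
lemma μ01_Ep : μ01 (Ep a0 b0 p)
    = ENNReal.ofReal |p.1 - a0| + ENNReal.ofReal |p.2 - b0| := by
  have hdisj : Disjoint (Ico (min p.1 a0) (max p.1 a0)) (Ioc (min p.2 b0) (max p.2 b0)) := by
    rw [Set.disjoint_left]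
    rintro x ⟨hx1, hx2⟩ ⟨hy1, hy2⟩
    have : max p.1 a0 ≤ min p.2 b0 := max_le (le_min h12.le hov1.le) (le_min hov2.le hab.le)
    exact absurd (hx2.trans_le this) (not_lt.2 hy1.le)
  have hsub1 : Ico (min p.1 a0) (max p.1 a0) ⊆ Icc (0:ℝ) 1 := by
    rintro x ⟨hx1, hx2⟩
    exact ⟨(le_min h1 ha0).trans hx1, hx2.le.trans (max_le (h12.le.trans h2) (hab.le.trans hb0))⟩
  have hsub2 : Ioc (min p.2 b0) (max p.2 b0) ⊆ Icc (0:ℝ) 1 := by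
    rintro x ⟨hx1, hx2⟩
    exact ⟨((le_min (h1.trans h12.le) (ha0.trans hab.le)).trans_lt hx1).le,
      hx2.trans (max_le h2 hb0)⟩
  rw [Ep, μ01, measure_union hdisj measurableSet_Ioc,
    Measure.restrict_apply measurableSet_Ico, Measure.restrict_apply measurableSet_Ioc,
    Set.inter_eq_self_of_subset_left hsub1, Set.inter_eq_self_of_subset_left hsub2,
    Real.volume_Ico, Real.volume_Ioc, max_sub_min_eq_abs, max_sub_min_eq_abs,
    abs_sub_comm a0 p.1, abs_sub_comm b0 p.2]

include ha0 hab hb0 h1 h12 h2 hov1 hov2 in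
lemma norm_vv_sq : ‖vv a0 b0 p‖ ^ 2 = |p.1 - a0| + |p.2 - b0| := by
  have hv := vv_ae a0 b0 p
  have step1 : ‖vv a0 b0 p‖ ^ 2 = ⟪vv a0 b0 p, vv a0 b0 p⟫ :=
    (real_inner_self_eq_norm_sq _).symm
  rw [step1, L2.inner_def]
  have step2 : ∀ᵐ x ∂μ01, @inner ℝ ℝ _ ((vv a0 b0 p : ℝ → ℝ) x) ((vv a0 b0 p : ℝ → ℝ) x)
      = (Ep a0 b0 p).indicator (fun _ => (1:ℝ)) x := by
    filter_upwards [hv] with x hx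
    simp only [RCLike.inner_apply, starRingEnd_apply, star_trivial, hx]
    exact dd_sq hov1 hov2 x
  rw [integral_congr_ae step2, integral_indicator_const _ (Ep_meas a0 b0 p),
    measureReal_def, μ01_Ep ha0 hab hb0 h1 h12 h2 hov1 hov2, smul_eq_mul, mul_one,
    ENNReal.toReal_add ENNReal.ofReal_ne_top ENNReal.ofReal_ne_top,
    ENNReal.toReal_ofReal (abs_nonneg _), ENNReal.toReal_ofReal (abs_nonneg _)]

include hov1 hov2 in
lemma inner_vv_le (g : L2) :
    |⟪vv a0 b0 p, g⟫| ≤ ‖vv a0 b0 p‖ * Real.sqrt (∫ x in Ep a0 b0 p, g x ^ 2 ∂μ01) := by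
  set gE : L2 := MemLp.toLp _ ((Lp.memLp g).indicator (Ep_meas a0 b0 p)) with hgE_def
  have hgE : ⇑gE =ᵐ[μ01] (Ep a0 b0 p).indicator g := MemLp.coeFn_toLp _
  have hinner : ⟪vv a0 b0 p, g⟫ = ⟪vv a0 b0 p, gE⟫ := by
    rw [L2.inner_def, L2.inner_def]
    refine integral_congr_ae ?_
    filter_upwards [vv_ae a0 b0 p, hgE] with x hx hx'
    simp only [RCLike.inner_apply, starRingEnd_apply, star_trivial, hx, hx']
    by_cases hmem : x ∈ Ep a0 b0 p
    · rw [Set.indicator_of_mem hmem]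
    · rw [dd_zero hov1 hov2 hmem, mul_zero, mul_zero]
  have hnorm : ‖gE‖ = Real.sqrt (∫ x in Ep a0 b0 p, g x ^ 2 ∂μ01) := by
    have hsq : ‖gE‖ ^ 2 = ∫ x in Ep a0 b0 p, g x ^ 2 ∂μ01 := by
      rw [← real_inner_self_eq_norm_sq, L2.inner_def, ← integral_indicator (Ep_meas a0 b0 p)]
      refine integral_congr_ae ?_
      filter_upwards [hgE] with x hx
      simp only [RCLike.inner_apply, starRingEnd_apply, star_trivial, hx]
      by_cases hmem : x ∈ Ep a0 b0 p
      · rw [Set.indicator_of_mem hmem, Set.indicator_of_mem hmem, sq]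
      · rw [Set.indicator_of_notMem hmem, Set.indicator_of_notMem hmem, zero_mul]
    rw [← hsq, Real.sqrt_sq (norm_nonneg _)]
  rw [hinner, ← hnorm]
  exact abs_real_inner_le_norm _ _

end withhyp

end NormRatioAux

open NormRatioAux Filter Set Real

set_option maxHeartbeats 1000000 in
set_option synthInstance.maxHeartbeats 200000 in
/-- Lemma 3. If `S` is a compact operator on `L²([0,1])` and
`(I+S)𝟙_{[t₁⁰,t₂⁰]} = 0` for some `0 ≤ t₁⁰ < t₂⁰ ≤ 1`, then
`‖(I+S)𝟙_{[t₁,t₂]}‖² / ‖𝟙_{[t₁,t₂]} - 𝟙_{[t₁⁰,t₂⁰]}‖² → 1` as `(t₁,t₂) → (t₁⁰,t₂⁰)`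
along pairs with `0 ≤ t₁ < t₂ ≤ 1`, `(t₁,t₂) ≠ (t₁⁰,t₂⁰)`. -/
theorem norm_ratio_tendsto_one
    (S : L2 →L[ℝ] L2) (hS : IsCompactOperator S)
    (a0 b0 : ℝ) (h₁ : 0 ≤ a0) (h₁₂ : a0 < b0) (h₂ : b0 ≤ 1)
    (hker : (ContinuousLinearMap.id ℝ L2 + S) (ind a0 b0) = 0) :
    Filter.Tendsto
      (fun p : ℝ × ℝ =>
        ‖(ContinuousLinearMap.id ℝ L2 + S) (ind p.1 p.2)‖ ^ 2 /
          ‖ind p.1 p.2 - ind a0 b0‖ ^ 2)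
      (nhdsWithin (a0, b0)
        {p : ℝ × ℝ | 0 ≤ p.1 ∧ p.1 < p.2 ∧ p.2 ≤ 1 ∧ p ≠ (a0, b0)})
      (nhds 1) := by
  set F := nhdsWithin (a0, b0)
    {p : ℝ × ℝ | 0 ≤ p.1 ∧ p.1 < p.2 ∧ p.2 ≤ 1 ∧ p ≠ (a0, b0)} with hF
  -- eventual hypotheses
  have hset : ∀ᶠ p in F, 0 ≤ p.1 ∧ p.1 < p.2 ∧ p.2 ≤ 1 ∧ p ≠ (a0, b0) :=
    self_mem_nhdsWithin
  have hov : ∀ᶠ p in F, p.1 < b0 ∧ a0 < p.2 := by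
    have hopen : IsOpen {p : ℝ × ℝ | p.1 < b0 ∧ a0 < p.2} :=
      (isOpen_lt continuous_fst continuous_const).inter
        (isOpen_lt continuous_const continuous_snd)
    exact nhdsWithin_le_nhds (hopen.mem_nhds ⟨h₁₂, h₁₂⟩)
  have hid : Filter.Tendsto (fun p : ℝ × ℝ => p) F (nhds (a0, b0)) :=
    tendsto_id.mono_right nhdsWithin_le_nhds
  -- weak convergence of the normalized differences
  have hweak : ∀ g : L2, Filter.Tendsto (fun p => @inner ℝ L2 _ (ww a0 b0 p) g) F (nhds 0) := by
    intro g
    have hint : Integrable (fun x => g x ^ 2) μ01 := (Lp.memLp g).integrable_sq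
    have hμ : Filter.Tendsto (fun p => μ01 (Ep a0 b0 p)) F (nhds 0) := by
      have hbnd : ∀ p : ℝ × ℝ, μ01 (Ep a0 b0 p)
          ≤ ENNReal.ofReal |p.1 - a0| + ENNReal.ofReal |p.2 - b0| := by
        intro p
        calc μ01 (Ep a0 b0 p) ≤ volume (Ep a0 b0 p) := Measure.restrict_apply_le _ _
          _ ≤ volume (Ico (min p.1 a0) (max p.1 a0)) + volume (Ioc (min p.2 b0) (max p.2 b0)) :=
              measure_union_le _ _
          _ = ENNReal.ofReal |p.1 - a0| + ENNReal.ofReal |p.2 - b0| := by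
              rw [Real.volume_Ico, Real.volume_Ioc, max_sub_min_eq_abs, max_sub_min_eq_abs,
                abs_sub_comm a0 p.1, abs_sub_comm b0 p.2]
      have hcont : Filter.Tendsto
          (fun p : ℝ × ℝ => ENNReal.ofReal |p.1 - a0| + ENNReal.ofReal |p.2 - b0|)
          F (nhds 0) := by
        have hc1 : Continuous fun p : ℝ × ℝ => ENNReal.ofReal |p.1 - a0| :=
          ENNReal.continuous_ofReal.comp ((continuous_fst.sub continuous_const).abs)
        have hc2 : Continuous fun p : ℝ × ℝ => ENNReal.ofReal |p.2 - b0| :=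
          ENNReal.continuous_ofReal.comp ((continuous_snd.sub continuous_const).abs)
        have hc := hc1.add hc2
        have := (hc.tendsto (a0, b0)).comp hid
        simpa [Function.comp_def] using this
      exact tendsto_of_tendsto_of_tendsto_of_le_of_le tendsto_const_nhds hcont
        (fun p => zero_le) hbnd
    have hI : Filter.Tendsto (fun p => ∫ x in Ep a0 b0 p, g x ^ 2 ∂μ01) F (nhds 0) :=
      hint.tendsto_setIntegral_nhds_zero hμ
    have hsqrt : Filter.Tendsto (fun p => Real.sqrt (∫ x in Ep a0 b0 p, g x ^ 2 ∂μ01))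
        F (nhds 0) := by
      have := (Real.continuous_sqrt.tendsto 0).comp hI
      simpa [Function.comp_def] using this
    refine squeeze_zero_norm' ?_ hsqrt
    filter_upwards [hov] with p hp
    obtain ⟨hov1, hov2⟩ := hp
    rw [Real.norm_eq_abs]
    have hb := inner_vv_le hov1 hov2 g
    rw [ww, real_inner_smul_left, abs_mul, abs_inv, abs_norm]
    calc ‖vv a0 b0 p‖⁻¹ * |@inner ℝ L2 _ (vv a0 b0 p) g|
        ≤ ‖vv a0 b0 p‖⁻¹ * (‖vv a0 b0 p‖ * Real.sqrt (∫ x in Ep a0 b0 p, g x ^ 2 ∂μ01)) := by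
          exact mul_le_mul_of_nonneg_left hb (inv_nonneg.2 (norm_nonneg _))
      _ = (‖vv a0 b0 p‖⁻¹ * ‖vv a0 b0 p‖) * Real.sqrt (∫ x in Ep a0 b0 p, g x ^ 2 ∂μ01) := by
          ring
      _ ≤ 1 * Real.sqrt (∫ x in Ep a0 b0 p, g x ^ 2 ∂μ01) := by
          refine mul_le_mul_of_nonneg_right ?_ (Real.sqrt_nonneg _)
          by_cases hv : ‖vv a0 b0 p‖ = 0
          · simp [hv]
          · rw [inv_mul_cancel₀ hv]
      _ = Real.sqrt (∫ x in Ep a0 b0 p, g x ^ 2 ∂μ01) := one_mul _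
  -- norm bound on ww
  have hwle : ∀ p : ℝ × ℝ, ‖ww a0 b0 p‖ ≤ 1 := by
    intro p
    rw [ww, norm_smul, norm_inv, norm_norm]
    by_cases hv : ‖vv a0 b0 p‖ = 0
    · simp [hv]
    · rw [inv_mul_cancel₀ hv]
  -- compactness: ‖S (ww p)‖ → 0
  have hcomp : Filter.Tendsto (fun p => ‖S (ww a0 b0 p)‖) F (nhds 0) := by
    obtain ⟨K, hK, hKmem⟩ := hS
    obtain ⟨r, hr, hrball⟩ := Metric.mem_nhds_iff.1 hKmem
    set K' : Set L2 := (fun z : L2 => (2 / r) • z) '' K with hK'def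
    have hK' : IsCompact K' := hK.image (continuous_const_smul _)
    have hmem : ∀ p : ℝ × ℝ, S (ww a0 b0 p) ∈ K' := by
      intro p
      have hball : (r / 2) • ww a0 b0 p ∈ Metric.ball (0 : L2) r := by
        rw [Metric.mem_ball, dist_zero_right, norm_smul, Real.norm_eq_abs,
          abs_of_nonneg (by positivity : (0:ℝ) ≤ r / 2)]
        calc r / 2 * ‖ww a0 b0 p‖ ≤ r / 2 * 1 :=
              mul_le_mul_of_nonneg_left (hwle p) (by positivity)
          _ < r := by linarith
      have hSK : S ((r / 2) • ww a0 b0 p) ∈ K := hrball hball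
      refine ⟨S ((r / 2) • ww a0 b0 p), hSK, ?_⟩
      show (2 / r) • S ((r / 2) • ww a0 b0 p) = S (ww a0 b0 p)
      have hrr : (2 / r) * (r / 2) = 1 := by field_simp
      rw [S.map_smul, smul_smul, hrr, one_smul]
    refine tendsto_of_subseq_tendsto fun ns hns => ?_
    obtain ⟨z, _, φ, hφ, hzφ⟩ := hK'.tendsto_subseq (fun n => hmem (ns n))
    have hz : z = 0 := by
      have h1' : Filter.Tendsto (fun n => @inner ℝ L2 _ (S (ww a0 b0 (ns (φ n)))) z)
          atTop (nhds (@inner ℝ L2 _ z z)) := hzφ.inner tendsto_const_nhds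
      have h2' : Filter.Tendsto (fun n => @inner ℝ L2 _ (S (ww a0 b0 (ns (φ n)))) z)
          atTop (nhds 0) := by
        have heq : ∀ n, @inner ℝ L2 _ (S (ww a0 b0 (ns (φ n)))) z
            = @inner ℝ L2 _ (ww a0 b0 (ns (φ n))) (ContinuousLinearMap.adjoint S z) := by
          intro n
          rw [ContinuousLinearMap.adjoint_inner_right]
        simp only [heq]
        exact ((hweak (ContinuousLinearMap.adjoint S z)).comp hns).comp
          (hφ.tendsto_atTop)
      have := tendsto_nhds_unique h1' h2'
      exact inner_self_eq_zero.1 this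
    refine ⟨φ, ?_⟩
    have : Filter.Tendsto (fun n => ‖S (ww a0 b0 (ns (φ n)))‖) atTop (nhds ‖z‖) :=
      hzφ.norm
    rw [hz, norm_zero] at this
    exact this
  -- norm of ww is eventually 1 and vv doesn't vanish eventually
  have hkey : ∀ᶠ p in F, ‖vv a0 b0 p‖ ≠ 0 ∧ ‖ww a0 b0 p‖ = 1 := by
    filter_upwards [hset, hov] with p hp hpo
    obtain ⟨hp1, hp12, hp2, hpne⟩ := hp
    obtain ⟨hov1, hov2⟩ := hpo
    have hsq := norm_vv_sq h₁ h₁₂ h₂ hp1 hp12 hp2 hov1 hov2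
    have hpos : 0 < |p.1 - a0| + |p.2 - b0| := by
      have hne : p.1 ≠ a0 ∨ p.2 ≠ b0 := by
        by_contra h
        push_neg at h
        exact hpne (Prod.ext h.1 h.2)
      rcases hne with h | h
      · exact add_pos_of_pos_of_nonneg (abs_pos.2 (sub_ne_zero.2 h)) (abs_nonneg _)
      · exact add_pos_of_nonneg_of_pos (abs_nonneg _) (abs_pos.2 (sub_ne_zero.2 h))
    have hvne : ‖vv a0 b0 p‖ ≠ 0 := by
      intro hcon
      rw [hcon] at hsq
      simp at hsq
      linarith
    refine ⟨hvne, ?_⟩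
    rw [ww, norm_smul, norm_inv, norm_norm, inv_mul_cancel₀ hvne]
  -- the normalized quantity tends to 1
  have hmain : Filter.Tendsto (fun p => ‖ww a0 b0 p + S (ww a0 b0 p)‖ ^ 2) F (nhds 1) := by
    have h1' : Filter.Tendsto (fun p => ‖ww a0 b0 p + S (ww a0 b0 p)‖) F (nhds 1) := by
      rw [tendsto_iff_dist_tendsto_zero]
      refine squeeze_zero_norm' ?_ hcomp
      filter_upwards [hkey] with p hp
      rw [Real.dist_eq, Real.norm_eq_abs, abs_abs]
      have := abs_norm_sub_norm_le (ww a0 b0 p + S (ww a0 b0 p)) (ww a0 b0 p)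
      rw [add_sub_cancel_left] at this
      rw [hp.2] at this
      exact this
    have := h1'.pow 2
    simpa using this
  -- eventual equality of the two expressions
  refine hmain.congr' ?_
  filter_upwards [hkey, hset, hov] with p hp hps hpo
  obtain ⟨hvne, hw1⟩ := hp
  have hTv : (ContinuousLinearMap.id ℝ L2 + S) (ind p.1 p.2)
      = (ContinuousLinearMap.id ℝ L2 + S) (vv a0 b0 p) := by
    have : ind p.1 p.2 = vv a0 b0 p + ind a0 b0 := by rw [vv, sub_add_cancel]
    rw [this, map_add, hker, add_zero]
  have hvw : vv a0 b0 p = ‖vv a0 b0 p‖ • ww a0 b0 p := by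
    rw [ww, smul_smul, mul_inv_cancel₀ hvne, one_smul]
  have hTw : (ContinuousLinearMap.id ℝ L2 + S) (ww a0 b0 p)
      = ww a0 b0 p + S (ww a0 b0 p) := by
    simp [ContinuousLinearMap.add_apply]
  have hnum : ‖(ContinuousLinearMap.id ℝ L2 + S) (ind p.1 p.2)‖ ^ 2
      = ‖vv a0 b0 p‖ ^ 2 * ‖ww a0 b0 p + S (ww a0 b0 p)‖ ^ 2 := by
    rw [hTv, hvw, (ContinuousLinearMap.id ℝ L2 + S).map_smul, norm_smul,
      Real.norm_eq_abs, abs_norm, mul_pow, hTw, norm_smul, Real.norm_eq_abs, abs_norm,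
      hw1, mul_one]
  have hden : ‖ind p.1 p.2 - ind a0 b0‖ ^ 2 = ‖vv a0 b0 p‖ ^ 2 := rfl
  rw [hnum, hden, mul_comm, mul_div_assoc, div_self (pow_ne_zero 2 hvne), mul_one]
end

section
/- Let H be a real Hilbert space, let L be a finite-dimensional subspace of H with orthonormal basis e₁,…,e_m, and let P be the orthogonal projection onto L. Then for any g₁,…,g_k ∈ H, G(g₁ − P g₁, …, g_k − P g_k) = G(g₁, …, g_k, e₁, …, e_m). -/
/-- Gram determinant of a finite family of vectors. -/
noncomputable def gram {H : Type*} [NormedAddCommGroup H] [InnerProductSpace ℝ H]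
    {n : ℕ} (v : Fin n → H) : ℝ :=
  (Matrix.of fun i j => (inner ℝ (v i) (v j) : ℝ)).det

/-- Lemma 4. If `L` is a finite-dimensional subspace of a real Hilbert
space `H` with orthonormal basis `e₁,…,e_m` and `P` is the orthogonal projection onto `L`,
then `G(g₁ - Pg₁, …, g_k - Pg_k) = G(g₁, …, g_k, e₁, …, e_m)` for all `g₁,…,g_k ∈ H`. -/
theorem gram_of_projection_complement
    {H : Type*} [NormedAddCommGroup H] [InnerProductSpace ℝ H]
    (L : Submodule ℝ H) [FiniteDimensional ℝ L]
    {m : ℕ} (e : Fin m → H) (he : Orthonormal ℝ e)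
    (hspan : Submodule.span ℝ (Set.range e) = L)
    {k : ℕ} (g : Fin k → H) :
    gram (fun i => g i - (L.orthogonalProjection (g i) : H)) =
      gram (Fin.append g e) := by
  classical
  -- `e` as an orthonormal basis of `L`
  have hmem : ∀ i, e i ∈ L := fun i => hspan ▸ Submodule.subset_span (Set.mem_range_self i)
  set e' : Fin m → L := Set.codRestrict e L hmem with he'def
  have he' : Orthonormal ℝ e' := he.codRestrict L hmem
  have hsp : ⊤ ≤ Submodule.span ℝ (Set.range e') := by
    have hmap : Submodule.map L.subtype (Submodule.span ℝ (Set.range e')) =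
        Submodule.map L.subtype ⊤ := by
      rw [Submodule.map_span, Submodule.map_top, Submodule.range_subtype]
      have himg : (⇑L.subtype '' Set.range e') = Set.range e := by
        ext x
        constructor
        · rintro ⟨y, ⟨i, rfl⟩, rfl⟩; exact ⟨i, rfl⟩
        · rintro ⟨i, rfl⟩; exact ⟨e' i, ⟨i, rfl⟩, rfl⟩
      rw [himg, hspan]
    exact le_of_eq ((Submodule.map_injective_of_injective
      (show Function.Injective L.subtype from Subtype.coe_injective)) hmap).symm
  set b : OrthonormalBasis (Fin m) ℝ L := OrthonormalBasis.mk he' hsp with hb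
  have hbcoe : ∀ i, (b i : H) = e i := fun i => by
    rw [hb, OrthonormalBasis.coe_mk]; rfl
  set h : Fin k → H := fun i => g i - (L.orthogonalProjection (g i) : H) with hh
  -- projection formula
  have hproj : ∀ x : H, (L.orthogonalProjection x : H) = ∑ l, (inner ℝ (e l) x : ℝ) • e l := by
    intro x
    have h1 := congrArg (Subtype.val : L → H) (b.orthogonalProjectionOnto_apply_eq_sum x)
    rw [h1]
    push_cast
    exact Finset.sum_congr rfl fun l _ => by rw [hbcoe]
  -- inner products of the h's
  have hperp : ∀ j, h j ∈ Lᗮ := fun j => Submodule.sub_starProjection_mem_orthogonal (K := L) (g j)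
  have hinner : ∀ i j, (inner ℝ (h i) (h j) : ℝ)
      = inner ℝ (g i) (g j) - ∑ l, (inner ℝ (g i) (e l) : ℝ) * inner ℝ (e l) (g j) := by
    intro i j
    have h0 : (inner ℝ ((L.orthogonalProjection (g i) : H)) (h j) : ℝ) = 0 :=
      (Submodule.mem_orthogonal L (h j)).mp (hperp j) _ (L.orthogonalProjection (g i)).2
    have h1 : (inner ℝ (h i) (h j) : ℝ) = inner ℝ (g i) (h j) := by
      rw [show h i = g i - (L.orthogonalProjection (g i) : H) from rfl,
        inner_sub_left, h0, sub_zero]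
    rw [h1, show h j = g j - (L.orthogonalProjection (g j) : H) from rfl,
      inner_sub_right, hproj (g j), inner_sum]
    congr 1
    exact Finset.sum_congr rfl fun l _ => by rw [real_inner_smul_right]; ring
  -- block matrix setup
  set A : Matrix (Fin k) (Fin k) ℝ := Matrix.of fun i j => (inner ℝ (g i) (g j) : ℝ) with hA
  set B : Matrix (Fin k) (Fin m) ℝ := Matrix.of fun i l => (inner ℝ (g i) (e l) : ℝ) with hB
  set C : Matrix (Fin m) (Fin k) ℝ := Matrix.of fun l j => (inner ℝ (e l) (g j) : ℝ) with hC
  have hD : ∀ l l' : Fin m, (inner ℝ (e l) (e l') : ℝ) = (1 : Matrix (Fin m) (Fin m) ℝ) l l' := by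
    intro l l'
    rw [orthonormal_iff_ite.mp he, Matrix.one_apply]
  have hRHS : gram (Fin.append g e)
      = ((Matrix.fromBlocks A B C 1).submatrix finSumFinEquiv.symm finSumFinEquiv.symm).det := by
    unfold gram
    congr 1
    ext i j
    refine Fin.addCases (fun i' => ?_) (fun i' => ?_) i <;>
      refine Fin.addCases (fun j' => ?_) (fun j' => ?_) j <;>
      simp [Fin.append_left, Fin.append_right, finSumFinEquiv_symm_apply_castAdd,
        finSumFinEquiv_symm_apply_natAdd, Matrix.fromBlocks, hA, hB, hC, hD]
  rw [hRHS, Matrix.det_submatrix_equiv_self, Matrix.det_fromBlocks_one₂₂]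
  unfold gram
  congr 1
  ext i j
  simp only [Matrix.sub_apply, Matrix.mul_apply, Matrix.of_apply, hA, hB, hC]
  exact hinner i j
end

section
/- Let B be a continuous linear operator on a real Hilbert space H that has a continuous inverse. Then for every k ≥ 1 there exists a constant c(k) > 0, depending only on k and B, such that for all q₁,…,q_k ∈ H, G(B q₁, …, B q_k) ≥ c(k) · G(q₁, …, q_k). -/
open Matrix

private lemma exists_psd_sqrt' {n : Type*} [Fintype n] [DecidableEq n] {P : Matrix n n ℝ}
    (hP : P.PosSemidef) : ∃ S : Matrix n n ℝ, S.PosSemidef ∧ S * S = P := by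
  open scoped MatrixOrder in
  exact ⟨CFC.sqrt P, (CFC.sqrt_nonneg P).posSemidef, CFC.sqrt_mul_sqrt_self P hP.nonneg⟩

private lemma psd_mulVec_eq_zero' {n : Type*} [Fintype n] [DecidableEq n] {P : Matrix n n ℝ}
    (hP : P.PosSemidef) (x : n → ℝ) (h : x ⬝ᵥ P *ᵥ x = 0) : P *ᵥ x = 0 := by
  obtain ⟨S, hS, hSS⟩ := exists_psd_sqrt' hP
  have hsym : Sᵀ = S := by
    have := hS.1
    rwa [Matrix.IsHermitian, conjTranspose_eq_transpose_of_trivial] at this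
  have key : (S *ᵥ x) ⬝ᵥ (S *ᵥ x) = 0 := by
    have : x ⬝ᵥ (S * S) *ᵥ x = (S *ᵥ x) ⬝ᵥ (S *ᵥ x) := by
      rw [← mulVec_mulVec, dotProduct_mulVec, ← mulVec_transpose, hsym]
    rw [hSS] at this
    rw [← this, h]
  have hz : S *ᵥ x = 0 := dotProduct_self_eq_zero.mp key
  rw [← hSS, ← mulVec_mulVec, hz, mulVec_zero]

private lemma eig_le_one' {n : Type*} [Fintype n] [DecidableEq n] {M : Matrix n n ℝ}
    (hM : M.IsHermitian) (h : (1 - M).PosSemidef) (i : n) : hM.eigenvalues i ≤ 1 := by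
  have hv1 : star (⇑(hM.eigenvectorBasis i)) ⬝ᵥ (⇑(hM.eigenvectorBasis i)) = 1 := by
    have h1 : ‖hM.eigenvectorBasis i‖ = 1 := hM.eigenvectorBasis.orthonormal.1 i
    have h2 : (inner ℝ (hM.eigenvectorBasis i) (hM.eigenvectorBasis i) : ℝ) = 1 := by
      rw [real_inner_self_eq_norm_sq, h1]; norm_num
    rw [EuclideanSpace.inner_eq_star_dotProduct] at h2
    exact h2
  have h3 := h.dotProduct_mulVec_nonneg (⇑(hM.eigenvectorBasis i))
  rw [sub_mulVec, one_mulVec, dotProduct_sub, hv1] at h3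
  have h4 := hM.eigenvalues_eq i
  simp only [RCLike.re_to_real, star_trivial] at h3 h4
  linarith

private lemma det_le_det_posdef' {n : Type*} [Fintype n] [DecidableEq n] {P Q : Matrix n n ℝ}
    (hP : P.PosSemidef) (hQ : Q.PosDef) (h : (Q - P).PosSemidef) :
    P.det ≤ Q.det := by
  obtain ⟨S, hS, hSS⟩ := exists_psd_sqrt' hQ.posSemidef
  have hdetS2 : S.det * S.det = Q.det := by rw [← det_mul, hSS]
  have hdetS_ne : S.det ≠ 0 := by
    intro h0; rw [h0, mul_zero] at hdetS2; exact hQ.det_pos.ne' hdetS2.symm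
  set T := S⁻¹ with hTdef
  have hST : S * T = 1 := mul_nonsing_inv _ hdetS_ne.isUnit
  have hTS : T * S = 1 := nonsing_inv_mul _ hdetS_ne.isUnit
  have hSherm : Sᴴ = S := hS.1
  have hTherm : Tᴴ = T := by rw [hTdef, conjTranspose_nonsing_inv, hSherm]
  set M := T * P * T with hMdef
  have hMpsd : M.PosSemidef := by
    have := hP.conjTranspose_mul_mul_same T
    rwa [hTherm] at this
  have hTQT : T * Q * T = 1 := by
    rw [← hSS, ← mul_assoc, mul_assoc T S S, ← mul_assoc T S, hTS, one_mul, hST]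
  have hIM : (1 - M).PosSemidef := by
    have := h.conjTranspose_mul_mul_same T
    rw [hTherm, Matrix.mul_sub, Matrix.sub_mul, hTQT] at this
    rwa [hMdef]
  have hdetM : M.det ≤ 1 := by
    rw [hMpsd.1.det_eq_prod_eigenvalues]

    exact Finset.prod_le_one (fun i _ => hMpsd.eigenvalues_nonneg i)
      (fun i _ => eig_le_one' hMpsd.1 hIM i)
  have hPeq : P = S * M * S := by
    rw [hMdef, ← mul_assoc, ← mul_assoc, hST, one_mul, mul_assoc, hTS, mul_one]
  have hPdet : P.det = Q.det * M.det := by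
    rw [hPeq, det_mul, det_mul, ← hdetS2]; ring
  rw [hPdet]
  calc Q.det * M.det ≤ Q.det * 1 := mul_le_mul_of_nonneg_left hdetM hQ.det_pos.le
    _ = Q.det := mul_one _

private lemma det_le_det' {n : Type*} [Fintype n] [DecidableEq n] {P Q : Matrix n n ℝ}
    (hP : P.PosSemidef) (hQ : Q.PosSemidef) (h : (Q - P).PosSemidef) :
    P.det ≤ Q.det := by
  rcases eq_or_ne Q.det 0 with h0 | h0
  · obtain ⟨x, hx0, hQx⟩ := (Matrix.exists_mulVec_eq_zero_iff).mpr h0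
    have h1 := h.dotProduct_mulVec_nonneg x
    rw [sub_mulVec, hQx, dotProduct_sub, dotProduct_zero, star_trivial] at h1
    have h2 := hP.dotProduct_mulVec_nonneg x
    rw [star_trivial] at h2
    have h3 : x ⬝ᵥ P *ᵥ x = 0 := le_antisymm (by linarith) h2
    have hPx : P *ᵥ x = 0 := psd_mulVec_eq_zero' hP x h3
    have : P.det = 0 := (Matrix.exists_mulVec_eq_zero_iff).mp ⟨x, hx0, hPx⟩
    rw [this, h0]
  · have hQpd : Q.PosDef := by
      refine PosDef.of_dotProduct_mulVec_pos hQ.1 (fun x hx => ?_)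
      rcases lt_or_eq_of_le (hQ.dotProduct_mulVec_nonneg x) with hlt | heq
      · exact hlt
      · exfalso
        have hQx : Q *ᵥ x = 0 := psd_mulVec_eq_zero' hQ x (by rw [star_trivial] at heq; exact heq.symm)
        exact h0 ((Matrix.exists_mulVec_eq_zero_iff).mp ⟨x, hx, hQx⟩)
    exact det_le_det_posdef' hP hQpd h

private lemma gram_qf {H : Type*} [NormedAddCommGroup H] [InnerProductSpace ℝ H]
    {k : ℕ} (v : Fin k → H) (x : Fin k → ℝ) :
    x ⬝ᵥ (Matrix.of fun i j => (inner ℝ (v i) (v j) : ℝ)) *ᵥ x = ‖∑ i, x i • v i‖ ^ 2 := by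
  rw [← real_inner_self_eq_norm_sq, sum_inner]
  simp only [inner_sum, real_inner_smul_left, real_inner_smul_right, dotProduct, mulVec,
    Matrix.of_apply, Finset.mul_sum]
  refine Finset.sum_congr rfl fun i _ => Finset.sum_congr rfl fun j _ => ?_
  ring

private lemma gram_psd {H : Type*} [NormedAddCommGroup H] [InnerProductSpace ℝ H]
    {k : ℕ} (v : Fin k → H) :
    (Matrix.of fun i j => (inner ℝ (v i) (v j) : ℝ)).PosSemidef := by
  refine PosSemidef.of_dotProduct_mulVec_nonneg ?_ ?_
  · ext i j
    simp [Matrix.conjTranspose_apply, real_inner_comm]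
  · intro x
    rw [star_trivial, gram_qf]
    positivity

/-- Lemma 5. If `B` is a continuously invertible continuous linear
operator on a real Hilbert space `H`, then for every `k ≥ 1` there is a constant
`c(k) > 0` such that `G(Bq₁, …, Bq_k) ≥ c(k)·G(q₁, …, q_k)` for all `q₁,…,q_k ∈ H`. -/
theorem gram_of_invertible_operator_ge
    {H : Type*} [NormedAddCommGroup H] [InnerProductSpace ℝ H] [CompleteSpace H]
    (B : H →L[ℝ] H) (Binv : H →L[ℝ] H)
    (hleft : Binv.comp B = ContinuousLinearMap.id ℝ H)
    (hright : B.comp Binv = ContinuousLinearMap.id ℝ H)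
    (k : ℕ) (hk : 1 ≤ k) :
    ∃ c : ℝ, 0 < c ∧ ∀ q : Fin k → H,
      c * gram q ≤ gram (fun i => B (q i)) := by
  set r : ℝ := ‖Binv‖ + 1 with hr
  have hrpos : 0 < r := by positivity
  have hrB : ‖Binv‖ ≤ r := by simp [hr]
  set s : ℝ := (r ^ 2)⁻¹ with hs
  have hspos : 0 < s := by positivity
  refine ⟨s ^ k, pow_pos hspos k, fun q => ?_⟩
  set G : Matrix (Fin k) (Fin k) ℝ := Matrix.of fun i j => (inner ℝ (q i) (q j) : ℝ) with hG
  set GB : Matrix (Fin k) (Fin k) ℝ :=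
    Matrix.of fun i j => (inner ℝ (B (q i)) (B (q j)) : ℝ) with hGB
  have hGpsd : G.PosSemidef := gram_psd q
  have hGBpsd : GB.PosSemidef := gram_psd (fun i => B (q i))
  have hPpsd : (s • G).PosSemidef := by
    refine PosSemidef.of_dotProduct_mulVec_nonneg ?_ ?_
    · show (s • G)ᴴ = s • G
      rw [conjTranspose_smul, star_trivial, hGpsd.1]
    · intro x
      have h0 := hGpsd.dotProduct_mulVec_nonneg x
      rw [star_trivial] at h0
      rw [star_trivial, smul_mulVec, dotProduct_smul, smul_eq_mul]
      exact mul_nonneg hspos.le h0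
  have hsub : (GB - s • G).PosSemidef := by
    refine PosSemidef.of_dotProduct_mulVec_nonneg ?_ ?_
    · exact hGBpsd.1.sub (hPpsd.1)
    · intro x
      rw [star_trivial, sub_mulVec, dotProduct_sub, smul_mulVec, dotProduct_smul]
      have h1 : x ⬝ᵥ GB *ᵥ x = ‖∑ i, x i • B (q i)‖ ^ 2 := gram_qf _ x
      have h2 : x ⬝ᵥ G *ᵥ x = ‖∑ i, x i • q i‖ ^ 2 := gram_qf q x
      rw [h1, h2]
      set u := ∑ i, x i • q i with hu
      have hBu : ∑ i, x i • B (q i) = B u := by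
        rw [hu, map_sum]; simp
      rw [hBu]
      have hinv : Binv (B u) = u := by
        have := congrArg (fun f => f u) hleft
        simpa using this
      have hub : ‖u‖ ≤ r * ‖B u‖ := by
        calc ‖u‖ = ‖Binv (B u)‖ := by rw [hinv]
          _ ≤ ‖Binv‖ * ‖B u‖ := Binv.le_opNorm _
          _ ≤ r * ‖B u‖ := by
            exact mul_le_mul_of_nonneg_right hrB (norm_nonneg _)
      have hsq : ‖u‖ ^ 2 ≤ r ^ 2 * ‖B u‖ ^ 2 := by
        have := mul_self_le_mul_self (norm_nonneg u) hub
        nlinarith [norm_nonneg u, norm_nonneg (B u)]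
      have : s * ‖u‖ ^ 2 ≤ ‖B u‖ ^ 2 := by
        rw [hs]
        rw [inv_mul_le_iff₀ (by positivity)]
        linarith
      simp only [smul_eq_mul]
      linarith
  have hdet := det_le_det' hPpsd hGBpsd hsub
  rw [Matrix.det_smul] at hdet
  simpa [_root_.gram, hG, hGB, Fintype.card_fin] using hdet
end

section
/- For every natural number n, the set M_n of elements of L²([0,1]) that have a representative which is a step function with at most n jumps — that is, of the form Σ_{i=0}^{n} c_i 𝟙_{[t_i, t_{i+1})} for some constants c₀,…,c_n and points 0 = t₀ ≤ t₁ ≤ … ≤ t_n ≤ t_{n+1} = 1 — is a closed subset of L²([0,1]). -/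
set_option synthInstance.maxHeartbeats 1000000
set_option maxHeartbeats 1000000


open MeasureTheory Filter Topology ENNReal

/-- Evaluation of the sum of indicators at a point in one of the intervals. -/
lemma sum_indicator_eval {n : ℕ} (t : Fin (n + 2) → ℝ) (ht : Monotone t)
    (c : Fin (n + 1) → ℝ) {x : ℝ} {i : Fin (n + 1)}
    (hx : x ∈ Set.Ico (t i.castSucc) (t i.succ)) :
    (∑ j : Fin (n + 1),
      Set.indicator (Set.Ico (t j.castSucc) (t j.succ)) (fun _ => c j) x) = c i := by
  rw [Finset.sum_eq_single i]
  · rw [Set.indicator_of_mem hx]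
  · intro j _ hji
    apply Set.indicator_of_notMem
    intro hxj
    rcases lt_or_gt_of_ne hji with h | h
    · have hle : t j.succ ≤ t i.castSucc := ht (Fin.succ_le_castSucc_iff.mpr h)
      exact absurd (hxj.2.trans_le (hle.trans hx.1)) (lt_irrefl x)
    · have hle : t i.succ ≤ t j.castSucc := ht (Fin.succ_le_castSucc_iff.mpr h)
      exact absurd (hx.2.trans_le (hle.trans hxj.1)) (lt_irrefl x)
  · intro h
    exact absurd (Finset.mem_univ i) h

/-- A point of `[0,1]` not in the range of `T` lies in an open interval. -/
lemma exists_mem_Ioo_of_not_mem_range {n : ℕ} (T : Fin (n + 2) → ℝ) (hT0 : T 0 = 0)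
    (hT1 : T (Fin.last (n + 1)) = 1) (hTm : Monotone T) {x : ℝ}
    (hx0 : x ∈ Set.Icc (0:ℝ) 1) (hx : x ∉ Set.range T) :
    ∃ i : Fin (n + 1), T i.castSucc < x ∧ x < T i.succ := by
  have hx0' : 0 < x := lt_of_le_of_ne hx0.1 (fun h => hx ⟨0, by rw [hT0, ← h]⟩)
  have hx1' : x < 1 := lt_of_le_of_ne hx0.2 (fun h => hx ⟨Fin.last _, by rw [hT1, h]⟩)
  set S : Finset (Fin (n+2)) := Finset.univ.filter (fun j => T j < x) with hSdef
  have h0S : (0 : Fin (n+2)) ∈ S := by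
    simp only [hSdef, Finset.mem_filter, Finset.mem_univ, true_and, hT0]
    exact hx0'
  have hS : S.Nonempty := ⟨0, h0S⟩
  set j := S.max' hS with hjdef
  have hjx : T j < x := (Finset.mem_filter.mp (S.max'_mem hS)).2
  have hjlast : j ≠ Fin.last (n+1) := by
    intro h
    rw [h, hT1] at hjx
    exact absurd hjx (not_lt.mpr hx1'.le)
  have hjlt : (j : ℕ) < n + 1 := by
    have := j.isLt
    have hne : (j : ℕ) ≠ n + 1 := fun h => hjlast (Fin.ext h)
    omega
  refine ⟨⟨(j : ℕ), hjlt⟩, ?_, ?_⟩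
  · have hcs : (⟨(j:ℕ), hjlt⟩ : Fin (n+1)).castSucc = j := Fin.ext rfl
    rw [hcs]; exact hjx
  · have hmem : (⟨(j:ℕ), hjlt⟩ : Fin (n+1)).succ ∉ S := by
      intro hmem
      have hle := S.le_max' _ hmem
      rw [← hjdef] at hle
      rw [Fin.le_def] at hle
      simp only [Fin.val_succ] at hle
      omega
    have hle : x ≤ T (⟨(j:ℕ), hjlt⟩ : Fin (n+1)).succ := by
      by_contra h
      push_neg at h
      exact hmem (Finset.mem_filter.mpr ⟨Finset.mem_univ _, h⟩)
    exact lt_of_le_of_ne hle (fun h => hx ⟨_, h.symm⟩)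

/-- Lemma 6. For every `n`, the set of elements of `L²([0,1])` having a
representative of the form `Σ_{i=0}^{n} c_i 𝟙_{[t_i, t_{i+1})}` with
`0 = t₀ ≤ t₁ ≤ … ≤ t_n ≤ t_{n+1} = 1` (step functions with at most `n` jumps) is closed
in `L²([0,1])`. -/
theorem step_functions_with_bounded_jumps_closed (n : ℕ) :
    IsClosed {f : L2 | ∃ (c : Fin (n + 1) → ℝ) (t : Fin (n + 2) → ℝ),
      t 0 = 0 ∧ t (Fin.last (n + 1)) = 1 ∧ Monotone t ∧
      ⇑f =ᵐ[μ01] fun x => ∑ i : Fin (n + 1),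
        Set.indicator (Set.Ico (t i.castSucc) (t i.succ)) (fun _ => c i) x} := by
  haveI : Fact ((1:ℝ≥0∞) ≤ 2) := ⟨one_le_two⟩
  rw [← isSeqClosed_iff_isClosed]
  intro F f hF hFf
  simp only [Set.mem_setOf_eq] at hF ⊢
  choose c t ht0 ht1 htm hae using hF
  -- extract a subsequence along which the endpoints converge
  have htmem : ∀ k, t k ∈ Set.pi Set.univ (fun _ : Fin (n+2) => Set.Icc (0:ℝ) 1) := by
    intro k i _
    constructor
    · rw [← ht0 k]; exact htm k (Fin.zero_le i)
    · rw [← ht1 k]; exact htm k (Fin.le_last i)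
  obtain ⟨T, -, φ, hφ, hφt⟩ :=
    (isCompact_univ_pi fun _ : Fin (n+2) => isCompact_Icc).tendsto_subseq htmem
  have hcoord : ∀ i, Tendsto (fun k => t (φ k) i) atTop (𝓝 (T i)) := fun i =>
    (tendsto_pi_nhds.mp hφt i)
  have hT0 : T 0 = 0 := by
    refine tendsto_nhds_unique (hcoord 0) ?_
    simp only [ht0]
    exact tendsto_const_nhds
  have hT1 : T (Fin.last (n+1)) = 1 := by
    refine tendsto_nhds_unique (hcoord (Fin.last (n+1))) ?_
    simp only [ht1]
    exact tendsto_const_nhds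
  have hTmono : Monotone T := fun i j hij =>
    le_of_tendsto_of_tendsto' (hcoord i) (hcoord j) (fun k => htm (φ k) hij)
  -- extract a further subsequence converging a.e.
  have h1 : Tendsto (fun k => F (φ k)) atTop (𝓝 f) := hFf.comp hφ.tendsto_atTop
  have h2 : TendstoInMeasure μ01 (fun k => ⇑(F (φ k))) atTop f :=
    tendstoInMeasure_of_tendsto_Lp h1
  obtain ⟨ψ, hψ, hψae⟩ := h2.exists_seq_tendsto_ae
  set σ : ℕ → ℕ := fun k => φ (ψ k) with hσdef
  have hσcoord : ∀ i, Tendsto (fun k => t (σ k) i) atTop (𝓝 (T i)) := fun i =>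
    (hcoord i).comp hψ.tendsto_atTop
  -- the good set
  have hrangeT : μ01 (Set.range T) = 0 := by
    rw [μ01, Measure.restrict_apply' measurableSet_Icc]
    exact measure_mono_null Set.inter_subset_left ((Set.finite_range T).measure_zero volume)
  have hIcc : ∀ᵐ x ∂μ01, x ∈ Set.Icc (0:ℝ) 1 := ae_restrict_mem measurableSet_Icc
  have haeall : ∀ᵐ x ∂μ01, ∀ k, F (σ k) x = ∑ i : Fin (n + 1),
      Set.indicator (Set.Ico (t (σ k) i.castSucc) (t (σ k) i.succ)) (fun _ => c (σ k) i) x :=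
    ae_all_iff.mpr fun k => hae (σ k)
  have hnotrange : ∀ᵐ x ∂μ01, x ∉ Set.range T := by
    rw [ae_iff]
    simp only [not_not]; exact hrangeT
  have hP : ∀ᵐ x ∂μ01,
      (∀ k, F (σ k) x = ∑ i : Fin (n + 1),
        Set.indicator (Set.Ico (t (σ k) i.castSucc) (t (σ k) i.succ)) (fun _ => c (σ k) i) x) ∧
      Tendsto (fun k => F (σ k) x) atTop (𝓝 (f x)) ∧
      x ∈ Set.Icc (0:ℝ) 1 ∧ x ∉ Set.range T := by
    filter_upwards [haeall, hψae, hIcc, hnotrange] with x h1' h2' h3' h4'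
    exact ⟨h1', h2', h3', h4'⟩
  -- pick witness points in each nondegenerate interval
  have hpick : ∀ i : Fin (n+1), T i.castSucc < T i.succ → ∃ x : ℝ,
      ((∀ k, F (σ k) x = ∑ j : Fin (n + 1),
        Set.indicator (Set.Ico (t (σ k) j.castSucc) (t (σ k) j.succ)) (fun _ => c (σ k) j) x) ∧
      Tendsto (fun k => F (σ k) x) atTop (𝓝 (f x))) ∧
      x ∈ Set.Ioo (T i.castSucc) (T i.succ) := by
    intro i hi
    by_contra h
    push_neg at h
    have hsub : Set.Ioo (T i.castSucc) (T i.succ) ⊆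
        {x : ℝ | ¬ ((∀ k, F (σ k) x = ∑ j : Fin (n + 1),
          Set.indicator (Set.Ico (t (σ k) j.castSucc) (t (σ k) j.succ)) (fun _ => c (σ k) j) x) ∧
          Tendsto (fun k => F (σ k) x) atTop (𝓝 (f x)) ∧
          x ∈ Set.Icc (0:ℝ) 1 ∧ x ∉ Set.range T)} := by
      intro x hxIoo hPx
      exact h x ⟨hPx.1, hPx.2.1⟩ hxIoo
    have hnull : μ01 (Set.Ioo (T i.castSucc) (T i.succ)) = 0 :=
      measure_mono_null hsub (by rw [← ae_iff]; exact hP)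
    have hsubIcc : Set.Ioo (T i.castSucc) (T i.succ) ⊆ Set.Icc (0:ℝ) 1 := by
      intro x hx
      constructor
      · have : (0:ℝ) = T 0 := hT0.symm
        exact le_of_lt (lt_of_le_of_lt (this ▸ hTmono (Fin.zero_le _)) hx.1)
      · have : T (Fin.last (n+1)) = 1 := hT1
        exact le_of_lt (lt_of_lt_of_le hx.2 (this ▸ hTmono (Fin.le_last _)))
    have hpos : μ01 (Set.Ioo (T i.castSucc) (T i.succ)) =
        ENNReal.ofReal (T i.succ - T i.castSucc) := by
      rw [μ01, Measure.restrict_apply measurableSet_Ioo, Set.inter_eq_left.mpr hsubIcc,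
        Real.volume_Ioo]
    rw [hpos] at hnull
    exact absurd hnull (ENNReal.ofReal_pos.mpr (sub_pos.mpr hi)).ne'
  choose xi hxiP hxiIoo using hpick
  set C : Fin (n+1) → ℝ := fun i =>
    if h : T i.castSucc < T i.succ then f (xi i h) else 0 with hCdef
  have hC : ∀ i (h : T i.castSucc < T i.succ),
      Tendsto (fun k => c (σ k) i) atTop (𝓝 (C i)) := by
    intro i h
    have hxP := hxiP i h
    have hxIoo := hxiIoo i h
    have h1' := (hσcoord i.castSucc).eventually_lt_const hxIoo.1
    have h2' := (hσcoord i.succ).eventually_const_lt hxIoo.2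
    have hev : (fun k => F (σ k) (xi i h)) =ᶠ[atTop] (fun k => c (σ k) i) := by
      filter_upwards [h1', h2'] with k hk1 hk2
      rw [hxP.1 k]
      exact sum_indicator_eval (t (σ k)) (htm (σ k)) (c (σ k)) ⟨hk1.le, hk2⟩
    have htend : Tendsto (fun k => F (σ k) (xi i h)) atTop (𝓝 (f (xi i h))) := hxP.2
    simp only [hCdef, dif_pos h]
    exact htend.congr' hev
  refine ⟨C, T, hT0, hT1, hTmono, ?_⟩
  filter_upwards [hP] with x hx
  obtain ⟨hx1, hx2, hx3, hx4⟩ := hx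
  obtain ⟨i, hi1, hi2⟩ := exists_mem_Ioo_of_not_mem_range T hT0 hT1 hTmono hx3 hx4
  have hideg : T i.castSucc < T i.succ := hi1.trans hi2
  have hGx : (∑ j : Fin (n + 1),
      Set.indicator (Set.Ico (T j.castSucc) (T j.succ)) (fun _ => C j) x) = C i :=
    sum_indicator_eval T hTmono C ⟨hi1.le, hi2⟩
  have h1' := (hσcoord i.castSucc).eventually_lt_const hi1
  have h2' := (hσcoord i.succ).eventually_const_lt hi2
  have hev : (fun k => F (σ k) x) =ᶠ[atTop] (fun k => c (σ k) i) := by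
    filter_upwards [h1', h2'] with k hk1 hk2
    rw [hx1 k]
    exact sum_indicator_eval (t (σ k)) (htm (σ k)) (c (σ k)) ⟨hk1.le, hk2⟩
  have htend : Tendsto (fun k => F (σ k) x) atTop (𝓝 (C i)) :=
    ((hC i hideg).congr' hev.symm)
  calc f x = C i := tendsto_nhds_unique hx2 htend
  _ = _ := hGx.symm
end
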